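/- The boundary operator F mapping the pair of double-sided Neumann data (γ₁ⁱw, γ₁ᵉw) of the unique solution w ∈ HK¹_{Γ,Δ=0} to the pair of Dirichlet data (fⁱ, fᵉ) is a well-defined bijection between the admissible Neumann data pairs and the admissible Dirichlet data pairs {(fⁱ, fᵉ) ∈ W^{1/2}₂(Γ)² : fⁱ − fᵉ ∈ W̃^{1/2}₂(Γ)}, and both F and F⁻¹ are continuous. -/
import Mathlib


/-- Section IV: the boundary operator `F`. `V` models
`HK¹_{Γ,Δ=0}`; `d_i, d_e` are the Dirichlet traces into `W = W^{1/2}₂(Γ)` and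
`n_i, n_e` the Neumann traces into `Wm = W^{-1/2}₂(Γ)`; `Wt` models
`W̃^{1/2}₂(Γ)` as a subspace of `W`, and every element of `V` has Dirichlet
jump in `Wt` (`hjump`).  By Theorem 10 the double-sided Neumann problem has a
continuous solution operator `SN` (`hSN`) and the solution is unique
(`hNuniq`); by Theorem 6 the double-sided Dirichlet problem with admissible
data (`fⁱ − fᵉ ∈ W̃^{1/2}₂(Γ)`) has a continuous solution operator `SD`
(`hSD`) with unique solution (`hDuniq`).  Conclusion: the boundary operator
`F`, mapping the Neumann data `(γ₁ⁱw, γ₁ᵉw)` of the unique solution `w` to its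
Dirichlet data `(fⁱ, fᵉ)`, is a well-defined bijection from the Neumann data
pairs `W^{-1/2}₂(Γ)²` onto the admissible Dirichlet data pairs
`{(fⁱ, fᵉ) : fⁱ − fᵉ ∈ W̃^{1/2}₂(Γ)}`, continuous together with its
inverse — i.e. a homeomorphism. -/
theorem stmt_14
    {V W Wm : Type*} [NormedAddCommGroup V] [NormedSpace ℝ V]
    [NormedAddCommGroup W] [NormedSpace ℝ W]
    [NormedAddCommGroup Wm] [NormedSpace ℝ Wm]
    (Wt : Submodule ℝ W)
    (d_i d_e : V →L[ℝ] W) (n_i n_e : V →L[ℝ] Wm)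
    (hjump : ∀ w : V, d_i w - d_e w ∈ Wt)
    (SN : (Wm × Wm) →L[ℝ] V)
    (hSN : ∀ g : Wm × Wm, n_i (SN g) = g.1 ∧ n_e (SN g) = g.2)
    (hNuniq : ∀ g : Wm × Wm, ∀ w : V, n_i w = g.1 ∧ n_e w = g.2 → w = SN g)
    (SD : (W × W) →L[ℝ] V)
    (hSD : ∀ f : W × W, f.1 - f.2 ∈ Wt → d_i (SD f) = f.1 ∧ d_e (SD f) = f.2)
    (hDuniq : ∀ f : W × W, f.1 - f.2 ∈ Wt →
      ∀ w : V, d_i w = f.1 ∧ d_e w = f.2 → w = SD f) :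
    ∃ F : (Wm × Wm) ≃ₜ {f : W × W // f.1 - f.2 ∈ Wt},
      ∀ g : Wm × Wm, (F g : W × W) = (d_i (SN g), d_e (SN g)) := by

  refine ⟨{
    toFun := fun g => ⟨(d_i (SN g), d_e (SN g)), hjump (SN g)⟩
    invFun := fun f => (n_i (SD f.1), n_e (SD f.1))
    left_inv := ?_
    right_inv := ?_
    continuous_toFun := ?_
    continuous_invFun := ?_ }, fun g => rfl⟩
  · intro g
    have h : SD (d_i (SN g), d_e (SN g)) = SN g :=
      (hDuniq _ (hjump (SN g)) (SN g) ⟨rfl, rfl⟩).symm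
    simp [h, (hSN g).1, (hSN g).2]
  · intro f
    have h : SN (n_i (SD f.1), n_e (SD f.1)) = SD f.1 :=
      (hNuniq _ (SD f.1) ⟨rfl, rfl⟩).symm
    ext <;> simp [h, (hSD f.1 f.2).1, (hSD f.1 f.2).2]
  · exact Continuous.subtype_mk
      ((d_i.continuous.comp SN.continuous).prodMk (d_e.continuous.comp SN.continuous)) _
  · exact (n_i.continuous.comp (SD.continuous.comp
      (continuous_subtype_val))).prodMk (n_e.continuous.comp (SD.continuous.comp
      (continuous_subtype_val)))
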